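/- Let f, g ∈ C¹[0,1] and n ≥ 1. Then for all x ∈ [0,1], |n[K_n(fg;x) − K_n(f;x)K_n(g;x)]| ≤ 2[x(1−x) + 1/(24(n+1))]·‖f′‖_∞‖g′‖_∞. -/

import Mathlib

open MeasureTheory Set

noncomputable def kantorovich (n : ℕ) (f : ℝ → ℝ) (x : ℝ) : ℝ :=
  ((n : ℝ) + 1) * ∑ k ∈ Finset.range (n + 1),
    (n.choose k : ℝ) * x ^ k * (1 - x) ^ (n - k) *
      ∫ t in ((k : ℝ) / ((n : ℝ) + 1))..(((k : ℝ) + 1) / ((n : ℝ) + 1)), f t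

noncomputable def supNorm (f : ℝ → ℝ) : ℝ :=
  sSup {y | ∃ x ∈ Icc (0:ℝ) 1, y = |f x|}

noncomputable def omega1 (f : ℝ → ℝ) (h : ℝ) : ℝ :=
  sSup {d | ∃ s ∈ Icc (0:ℝ) 1, ∃ t ∈ Icc (0:ℝ) 1, |s - t| ≤ h ∧ d = |f s - f t|}

noncomputable def omega2 (f : ℝ → ℝ) (h : ℝ) : ℝ :=
  sSup {d | ∃ t δ : ℝ, 0 < δ ∧ δ ≤ h ∧ t - δ ∈ Icc (0:ℝ) 1 ∧ t + δ ∈ Icc (0:ℝ) 1 ∧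
    d = |f (t + δ) - 2 * f t + f (t - δ)|}


open Finset Polynomial intervalIntegral


lemma l2_bound (f : ℝ → ℝ) (a b K : ℝ) (hab : a < b)
    (hfc : ContinuousOn f (Icc a b)) (hK : 0 ≤ K)
    (hlf : ∀ s ∈ Icc a b, ∀ t ∈ Icc a b, |f s - f t| ≤ K * |s - t|)
    (A : ℝ) (hA : ∫ t in a..b, f t = (b - a) * A) :
    ∫ t in a..b, (f t - A)^2 ≤ K^2 * (b - a)^3 / 12 := by
  have hab' : a ≤ b := hab.le
  have hfi : IntervalIntegrable f volume a b := hfc.intervalIntegrable_of_Icc hab'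
  set m := (a + b) / 2 with hm
  have hmI : m ∈ Icc a b := ⟨by simp [hm]; linarith, by simp [hm]; linarith⟩
  have hc1 : ContinuousOn (fun t => (f t - A)^2) (Icc a b) :=
    ((hfc.sub continuousOn_const).pow 2)
  have hc2 : ContinuousOn (fun t => (f t - f m)^2) (Icc a b) :=
    ((hfc.sub continuousOn_const).pow 2)
  have hi1 : IntervalIntegrable (fun t => (f t - A)^2) volume a b :=
    hc1.intervalIntegrable_of_Icc hab'
  have hi2 : IntervalIntegrable (fun t => (f t - f m)^2) volume a b :=
    hc2.intervalIntegrable_of_Icc hab'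
  have hi3 : IntervalIntegrable (fun t => K^2 * (t - m)^2) volume a b := by
    apply Continuous.intervalIntegrable; continuity
  have step1 : ∫ t in a..b, (f t - A)^2 ≤ ∫ t in a..b, (f t - f m)^2 := by
    have expand : ∫ t in a..b, (f t - f m)^2
        = (∫ t in a..b, (f t - A)^2) + (b - a) * (A - f m)^2 := by
      have e : ∀ t, (f t - f m)^2 = (f t - A)^2 + ((A - f m) * (2 * f t) + ((f m)^2 - A^2)) := by
        intro t; ring
      rw [intervalIntegral.integral_congr (g := fun t => (f t - A)^2 + ((A - f m) * (2 * f t) + ((f m)^2 - A^2))) (fun t _ => e t)]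
      rw [intervalIntegral.integral_add hi1 (by
        apply IntervalIntegrable.add
        · exact (hfi.const_mul 2).const_mul _
        · exact intervalIntegrable_const)]
      rw [intervalIntegral.integral_add ((hfi.const_mul 2).const_mul _) intervalIntegrable_const]
      rw [intervalIntegral.integral_const_mul, intervalIntegral.integral_const_mul, hA,
        intervalIntegral.integral_const]
      simp only [smul_eq_mul]; ring
    nlinarith [sq_nonneg (A - f m), hab]
  have step2 : ∫ t in a..b, (f t - f m)^2 ≤ ∫ t in a..b, K^2 * (t - m)^2 := by
    apply intervalIntegral.integral_mono_on hab' hi2 hi3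
    intro t ht
    have h := hlf t ht m hmI
    calc (f t - f m)^2 = |f t - f m|^2 := (sq_abs _).symm
      _ ≤ (K * |t - m|)^2 := by
          apply pow_le_pow_left₀ (abs_nonneg _) h
      _ = K^2 * (t - m)^2 := by rw [mul_pow, sq_abs]
  have step3 : ∫ t in a..b, K^2 * (t - m)^2 = K^2 * (b - a)^3 / 12 := by
    rw [intervalIntegral.integral_const_mul,
      intervalIntegral.integral_comp_sub_right (fun u => u^2) m, integral_pow]
    have h1 : a - m = -((b-a)/2) := by rw [hm]; ring
    have h2 : b - m = (b-a)/2 := by rw [hm]; ring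
    rw [h1, h2]; ring
  linarith

lemma cell_bound (f g : ℝ → ℝ) (a b Kf Kg : ℝ) (hab : a < b)
    (hfc : ContinuousOn f (Icc a b)) (hgc : ContinuousOn g (Icc a b))
    (hKf : 0 ≤ Kf) (hKg : 0 ≤ Kg)
    (hlf : ∀ s ∈ Icc a b, ∀ t ∈ Icc a b, |f s - f t| ≤ Kf * |s - t|)
    (hlg : ∀ s ∈ Icc a b, ∀ t ∈ Icc a b, |g s - g t| ≤ Kg * |s - t|) :
    |(b - a) * (∫ t in a..b, f t * g t)
        - (∫ t in a..b, f t) * (∫ t in a..b, g t)|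
      ≤ Kf * Kg * (b - a)^4 / 12 := by
  have hab' : a ≤ b := hab.le
  have hL : 0 < b - a := by linarith
  have hfi : IntervalIntegrable f volume a b := hfc.intervalIntegrable_of_Icc hab'
  have hgi : IntervalIntegrable g volume a b := hgc.intervalIntegrable_of_Icc hab'
  -- degenerate case: f (or g) constant
  by_cases hKf0 : Kf = 0
  · have hconst : ∀ t ∈ Icc a b, f t = f a := by
      intro t ht
      have := hlf t ht a ⟨le_rfl, hab'⟩
      have h0 : |f t - f a| = 0 := le_antisymm (by rw [hKf0] at hlf; simpa using hlf t ht a ⟨le_rfl, hab'⟩) (abs_nonneg _)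
      have := abs_eq_zero.mp h0
      linarith [this]
    have e1 : ∫ t in a..b, f t * g t = f a * ∫ t in a..b, g t := by
      rw [← intervalIntegral.integral_const_mul]
      apply intervalIntegral.integral_congr
      intro t ht
      rw [uIcc_of_le hab'] at ht
      show f t * g t = f a * g t
      rw [hconst t ht]
    have e2 : ∫ t in a..b, f t = (b - a) * f a := by
      have : ∫ t in a..b, f t = ∫ _t in a..b, f a := by
        apply intervalIntegral.integral_congr
        intro t ht
        rw [uIcc_of_le hab'] at ht
        exact hconst t ht
      rw [this, intervalIntegral.integral_const, smul_eq_mul]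
    rw [e1, e2]
    have : (b - a) * (f a * ∫ t in a..b, g t) - (b - a) * f a * ∫ t in a..b, g t = 0 := by ring
    rw [this, abs_zero]
    positivity
  by_cases hKg0 : Kg = 0
  · have hconst : ∀ t ∈ Icc a b, g t = g a := by
      intro t ht
      have h0 : |g t - g a| = 0 := le_antisymm (by rw [hKg0] at hlg; simpa using hlg t ht a ⟨le_rfl, hab'⟩) (abs_nonneg _)
      have := abs_eq_zero.mp h0
      linarith [this]
    have e1 : ∫ t in a..b, f t * g t = g a * ∫ t in a..b, f t := by
      rw [← intervalIntegral.integral_const_mul]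
      apply intervalIntegral.integral_congr
      intro t ht
      rw [uIcc_of_le hab'] at ht
      show f t * g t = g a * f t
      rw [hconst t ht]; ring
    have e2 : ∫ t in a..b, g t = (b - a) * g a := by
      have : ∫ t in a..b, g t = ∫ _t in a..b, g a := by
        apply intervalIntegral.integral_congr
        intro t ht
        rw [uIcc_of_le hab'] at ht
        exact hconst t ht
      rw [this, intervalIntegral.integral_const, smul_eq_mul]
    rw [e1, e2]
    have : (b - a) * (g a * ∫ t in a..b, f t) - (∫ t in a..b, f t) * ((b - a) * g a) = 0 := by ring
    rw [this, abs_zero]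
    positivity
  have hKfp : 0 < Kf := lt_of_le_of_ne hKf (Ne.symm hKf0)
  have hKgp : 0 < Kg := lt_of_le_of_ne hKg (Ne.symm hKg0)
  set A := (∫ t in a..b, f t) / (b - a) with hAdef
  set B := (∫ t in a..b, g t) / (b - a) with hBdef
  have hA : ∫ t in a..b, f t = (b - a) * A := by rw [hAdef, mul_div_assoc', mul_comm, mul_div_assoc, div_self hL.ne', mul_one]
  have hB : ∫ t in a..b, g t = (b - a) * B := by rw [hBdef, mul_div_assoc', mul_comm, mul_div_assoc, div_self hL.ne', mul_one]
  have hfA : IntervalIntegrable (fun t => (f t - A)^2) volume a b :=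
    (((hfc.sub continuousOn_const).pow 2)).intervalIntegrable_of_Icc hab'
  have hgB : IntervalIntegrable (fun t => (g t - B)^2) volume a b :=
    (((hgc.sub continuousOn_const).pow 2)).intervalIntegrable_of_Icc hab'
  have habs : IntervalIntegrable (fun t => |f t - A| * |g t - B|) volume a b :=
    (((hfc.sub continuousOn_const).abs.mul (hgc.sub continuousOn_const).abs)).intervalIntegrable_of_Icc hab'
  -- identity
  have hid : (b - a) * (∫ t in a..b, f t * g t)
      - (∫ t in a..b, f t) * (∫ t in a..b, g t)
      = (b - a) * ∫ t in a..b, (f t - A) * (g t - B) := by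
    have e : ∀ t, (f t - A) * (g t - B) = f t * g t - A * g t - B * f t + A * B := by
      intro t; ring
    rw [intervalIntegral.integral_congr (g := fun t => f t * g t - A * g t - B * f t + A * B) (fun t _ => e t)]
    rw [intervalIntegral.integral_add ((show IntervalIntegrable (fun t => f t * g t) volume a b from (hfc.mul hgc).intervalIntegrable_of_Icc hab').sub
        (hgi.const_mul A) |>.sub (hfi.const_mul B)) intervalIntegrable_const]
    rw [intervalIntegral.integral_sub ((show IntervalIntegrable (fun t => f t * g t) volume a b from (hfc.mul hgc).intervalIntegrable_of_Icc hab').sub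
        (hgi.const_mul A)) (hfi.const_mul B)]
    rw [intervalIntegral.integral_sub (show IntervalIntegrable (fun t => f t * g t) volume a b from (hfc.mul hgc).intervalIntegrable_of_Icc hab')
        (hgi.const_mul A)]
    rw [intervalIntegral.integral_const_mul, intervalIntegral.integral_const_mul,
      intervalIntegral.integral_const, hA, hB]
    simp only [smul_eq_mul]; ring
  rw [hid, abs_mul, abs_of_pos hL]
  have key1 : |∫ t in a..b, (f t - A) * (g t - B)| ≤ ∫ t in a..b, |f t - A| * |g t - B| := by
    have := intervalIntegral.abs_integral_le_integral_abs (μ := volume)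
      (f := fun t => (f t - A) * (g t - B)) hab'
    simpa [abs_mul] using this
  have key2 : ∫ t in a..b, |f t - A| * |g t - B|
      ≤ ∫ t in a..b, (Kg/Kf * (f t - A)^2 + Kf/Kg * (g t - B)^2) / 2 := by
    apply intervalIntegral.integral_mono_on hab' habs
    · exact ((hfA.const_mul _).add (hgB.const_mul _)).div_const 2
    have pt : ∀ u v : ℝ, |u| * |v| ≤ (Kg/Kf * u^2 + Kf/Kg * v^2)/2 := by
      intro u v
      have h : 2*(Kf*Kg)*(|u| * |v|) ≤ Kg^2*u^2 + Kf^2*v^2 := by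
        nlinarith [sq_nonneg (Kg * |u| - Kf * |v|), sq_abs u, sq_abs v]
      have teq : (Kg/Kf * u^2 + Kf/Kg * v^2)/2 = (Kg^2*u^2 + Kf^2*v^2)/(2*(Kf*Kg)) := by
        field_simp
      rw [teq, le_div_iff₀ (by positivity)]
      linarith
    intro t _
    exact pt (f t - A) (g t - B)
  have key3 : ∫ t in a..b, (Kg/Kf * (f t - A)^2 + Kf/Kg * (g t - B)^2) / 2
      ≤ Kf * Kg * (b - a)^3 / 12 := by
    rw [intervalIntegral.integral_div, intervalIntegral.integral_add (hfA.const_mul _) (hgB.const_mul _),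
      intervalIntegral.integral_const_mul, intervalIntegral.integral_const_mul]
    have b1 := l2_bound f a b Kf hab hfc hKf hlf A hA
    have b2 := l2_bound g a b Kg hab hgc hKg hlg B hB
    have i1 : 0 ≤ ∫ t in a..b, (f t - A)^2 := by
      apply intervalIntegral.integral_nonneg hab'; intro t _; positivity
    have i2 : 0 ≤ ∫ t in a..b, (g t - B)^2 := by
      apply intervalIntegral.integral_nonneg hab'; intro t _; positivity
    have hd1 : Kg/Kf * (∫ t in a..b, (f t - A)^2) ≤ Kg/Kf * (Kf^2 * (b-a)^3/12) :=
      mul_le_mul_of_nonneg_left b1 (by positivity)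
    have hd2 : Kf/Kg * (∫ t in a..b, (g t - B)^2) ≤ Kf/Kg * (Kg^2 * (b-a)^3/12) :=
      mul_le_mul_of_nonneg_left b2 (by positivity)
    have e1 : Kg/Kf * (Kf^2 * (b-a)^3/12) = Kf * Kg * (b-a)^3 / 12 := by
      field_simp
    have e2 : Kf/Kg * (Kg^2 * (b-a)^3/12) = Kf * Kg * (b-a)^3 / 12 := by
      field_simp
    rw [e1] at hd1; rw [e2] at hd2
    linarith
  calc (b - a) * |∫ t in a..b, (f t - A) * (g t - B)|
      ≤ (b - a) * (Kf * Kg * (b - a)^3 / 12) := by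
        apply mul_le_mul_of_nonneg_left (le_trans key1 (le_trans key2 key3)) hL.le
    _ = Kf * Kg * (b - a)^4 / 12 := by ring


lemma double_sum_id (s : Finset ℕ) (p a b : ℕ → ℝ) :
    ∑ j ∈ s, ∑ k ∈ s, p j * p k * ((a j - a k) * (b j - b k))
      = 2 * ((∑ j ∈ s, p j) * (∑ j ∈ s, p j * (a j * b j))
          - (∑ j ∈ s, p j * a j) * (∑ j ∈ s, p j * b j)) := by
  have inner : ∀ j, ∑ k ∈ s, p j * p k * ((a j - a k) * (b j - b k))
      = p j * (a j * b j) * (∑ k ∈ s, p k) - p j * a j * (∑ k ∈ s, p k * b k)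
        - p j * b j * (∑ k ∈ s, p k * a k) + p j * (∑ k ∈ s, p k * (a k * b k)) := by
    intro j
    rw [Finset.mul_sum, Finset.mul_sum, Finset.mul_sum, Finset.mul_sum,
      ← Finset.sum_sub_distrib, ← Finset.sum_sub_distrib, ← Finset.sum_add_distrib]
    apply Finset.sum_congr rfl
    intro k _; ring
  rw [Finset.sum_congr rfl (fun j _ => inner j)]
  rw [Finset.sum_add_distrib, Finset.sum_sub_distrib, Finset.sum_sub_distrib,
    ← Finset.sum_mul, ← Finset.sum_mul, ← Finset.sum_mul, ← Finset.sum_mul]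
  ring

lemma abstract_bound (n : ℕ) (hn : 1 ≤ n) (x : ℝ) (hx0 : (0:ℝ) ≤ x) (hx1 : x ≤ 1)
    (P F G H : ℕ → ℝ) (Mf Mg : ℝ) (hMf : 0 ≤ Mf) (hMg : 0 ≤ Mg) (N : ℝ) (hN : N = (n:ℝ)+1)
    (hP0 : ∀ k, 0 ≤ P k) (hP1 : ∑ k ∈ Finset.range (n+1), P k = 1)
    (hPmean : ∑ k ∈ Finset.range (n+1), P k * (k:ℝ) = (n:ℝ)*x)
    (hPk2 : ∑ k ∈ Finset.range (n+1), P k * ((k:ℝ)*(k:ℝ)) = (n:ℝ)*x*(1-x) + ((n:ℝ)*x)^2)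
    (hcell : ∀ k ∈ Finset.range (n+1), |H k - F k * G k| ≤ Mf*Mg/(12*N^2))
    (hshF : ∀ j ∈ Finset.range (n+1), ∀ k ∈ Finset.range (n+1),
      |F j - F k| ≤ Mf*(|(j:ℝ)-(k:ℝ)|/N))
    (hshG : ∀ j ∈ Finset.range (n+1), ∀ k ∈ Finset.range (n+1),
      |G j - G k| ≤ Mg*(|(j:ℝ)-(k:ℝ)|/N)) :
    |(n:ℝ) * ((∑ k ∈ Finset.range (n+1), P k * H k)
        - (∑ k ∈ Finset.range (n+1), P k * F k) * (∑ k ∈ Finset.range (n+1), P k * G k))|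
      ≤ 2 * (x * (1-x) + 1/(24*N)) * Mf * Mg := by
  have hNpos : (0:ℝ) < N := by rw [hN]; positivity
  set R := Finset.range (n+1) with hR
  -- first piece
  have B1 : |∑ k ∈ R, P k * (H k - F k * G k)| ≤ Mf*Mg/(12*N^2) := by
    calc |∑ k ∈ R, P k * (H k - F k * G k)| ≤ ∑ k ∈ R, |P k * (H k - F k * G k)| :=
          Finset.abs_sum_le_sum_abs _ _
      _ ≤ ∑ k ∈ R, P k * (Mf*Mg/(12*N^2)) := by
          apply Finset.sum_le_sum
          intro k hk
          rw [abs_mul, abs_of_nonneg (hP0 k)]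
          exact mul_le_mul_of_nonneg_left (hcell k hk) (hP0 k)
      _ = Mf*Mg/(12*N^2) := by rw [← Finset.sum_mul, hP1, one_mul]
  -- second piece
  have hdd := double_sum_id R P F G
  rw [hP1, one_mul] at hdd
  have hdd2 := double_sum_id R P (fun k => (k:ℝ)) (fun k => (k:ℝ))
  rw [hP1, one_mul, hPmean, hPk2] at hdd2
  have hvar : ∑ j ∈ R, ∑ k ∈ R, P j * P k * (((j:ℝ)-(k:ℝ)) * ((j:ℝ)-(k:ℝ)))
      = 2 * ((n:ℝ)*x*(1-x)) := by rw [hdd2]; ring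
  have B2 : |(∑ k ∈ R, P k * (F k * G k))
      - (∑ k ∈ R, P k * F k) * (∑ k ∈ R, P k * G k)|
      ≤ Mf*Mg*((n:ℝ)*x*(1-x))/N^2 := by
    have habs : |∑ j ∈ R, ∑ k ∈ R, P j * P k * ((F j - F k) * (G j - G k))|
        ≤ ∑ j ∈ R, ∑ k ∈ R, (Mf*Mg/N^2) * (P j * P k * (((j:ℝ)-(k:ℝ)) * ((j:ℝ)-(k:ℝ)))) := by
      calc |∑ j ∈ R, ∑ k ∈ R, P j * P k * ((F j - F k) * (G j - G k))|
          ≤ ∑ j ∈ R, |∑ k ∈ R, P j * P k * ((F j - F k) * (G j - G k))| :=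
            Finset.abs_sum_le_sum_abs _ _
        _ ≤ ∑ j ∈ R, ∑ k ∈ R, |P j * P k * ((F j - F k) * (G j - G k))| :=
            Finset.sum_le_sum fun j _ => Finset.abs_sum_le_sum_abs _ _
        _ ≤ ∑ j ∈ R, ∑ k ∈ R, (Mf*Mg/N^2) * (P j * P k * (((j:ℝ)-(k:ℝ)) * ((j:ℝ)-(k:ℝ)))) := by
            apply Finset.sum_le_sum
            intro j hj
            apply Finset.sum_le_sum
            intro k hk
            rw [abs_mul, abs_mul, abs_of_nonneg (hP0 j), abs_of_nonneg (hP0 k), abs_mul]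
            have h1 : |F j - F k| * |G j - G k|
                ≤ (Mf*(|(j:ℝ)-(k:ℝ)|/N)) * (Mg*(|(j:ℝ)-(k:ℝ)|/N)) := by
              apply mul_le_mul (hshF j hj k hk) (hshG j hj k hk) (abs_nonneg _) (by positivity)
            have h2 : (Mf*(|(j:ℝ)-(k:ℝ)|/N)) * (Mg*(|(j:ℝ)-(k:ℝ)|/N))
                = (Mf*Mg/N^2) * (|(j:ℝ)-(k:ℝ)| * |(j:ℝ)-(k:ℝ)|) := by
              have : ∀ a : ℝ, (Mf*(a/N)) * (Mg*(a/N)) = (Mf*Mg/N^2) * (a * a) := by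
                intro a; field_simp
              exact this _
            rw [h2, abs_mul_abs_self] at h1
            calc P j * P k * (|F j - F k| * |G j - G k|)
                ≤ P j * P k * ((Mf*Mg/N^2) * (((j:ℝ)-(k:ℝ)) * ((j:ℝ)-(k:ℝ)))) := by
                  exact mul_le_mul_of_nonneg_left h1 (mul_nonneg (hP0 j) (hP0 k))
              _ = (Mf*Mg/N^2) * (P j * P k * (((j:ℝ)-(k:ℝ)) * ((j:ℝ)-(k:ℝ)))) := by ring
    have hsum : ∑ j ∈ R, ∑ k ∈ R, (Mf*Mg/N^2) * (P j * P k * (((j:ℝ)-(k:ℝ)) * ((j:ℝ)-(k:ℝ))))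
        = (Mf*Mg/N^2) * (2 * ((n:ℝ)*x*(1-x))) := by
      rw [← hvar, Finset.mul_sum]
      apply Finset.sum_congr rfl
      intro j _
      rw [Finset.mul_sum]
    rw [hsum] at habs
    have : (∑ k ∈ R, P k * (F k * G k)) - (∑ k ∈ R, P k * F k) * (∑ k ∈ R, P k * G k)
        = (∑ j ∈ R, ∑ k ∈ R, P j * P k * ((F j - F k) * (G j - G k))) / 2 := by
      rw [hdd]; ring
    rw [this, abs_div, abs_two]
    rw [div_le_iff₀ (by norm_num : (0:ℝ) < 2)]
    calc |∑ j ∈ R, ∑ k ∈ R, P j * P k * ((F j - F k) * (G j - G k))|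
        ≤ (Mf*Mg/N^2) * (2 * ((n:ℝ)*x*(1-x))) := habs
      _ = Mf*Mg*((n:ℝ)*x*(1-x))/N^2 * 2 := by ring
  -- combine
  have split : (∑ k ∈ R, P k * H k) - (∑ k ∈ R, P k * F k) * (∑ k ∈ R, P k * G k)
      = (∑ k ∈ R, P k * (H k - F k * G k))
        + ((∑ k ∈ R, P k * (F k * G k)) - (∑ k ∈ R, P k * F k) * (∑ k ∈ R, P k * G k)) := by
    have e : ∑ k ∈ R, P k * (H k - F k * G k)
        = (∑ k ∈ R, P k * H k) - ∑ k ∈ R, P k * (F k * G k) := by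
      rw [← Finset.sum_sub_distrib]
      apply Finset.sum_congr rfl
      intro k _; ring
    rw [e]; ring
  have htri : |(∑ k ∈ R, P k * H k) - (∑ k ∈ R, P k * F k) * (∑ k ∈ R, P k * G k)|
      ≤ Mf*Mg/(12*N^2) + Mf*Mg*((n:ℝ)*x*(1-x))/N^2 := by
    rw [split]
    exact (abs_add_le _ _).trans (add_le_add B1 B2)
  rw [abs_mul, abs_of_nonneg (by positivity : (0:ℝ) ≤ (n:ℝ))]
  have hmul : (n:ℝ) * |(∑ k ∈ R, P k * H k) - (∑ k ∈ R, P k * F k) * (∑ k ∈ R, P k * G k)|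
      ≤ (n:ℝ) * (Mf*Mg/(12*N^2) + Mf*Mg*((n:ℝ)*x*(1-x))/N^2) :=
    mul_le_mul_of_nonneg_left htri (by positivity)
  have hnN : (n:ℝ) ≤ N := by rw [hN]; linarith
  have hxq : 0 ≤ x * (1-x) := mul_nonneg hx0 (by linarith)
  have hMfMg : 0 ≤ Mf * Mg := mul_nonneg hMf hMg
  have q1 : (n:ℝ) * (Mf*Mg/(12*N^2)) ≤ Mf*Mg/(12*N) := by
    have hr : (n:ℝ)/(12*N^2) ≤ 1/(12*N) := by
      rw [div_le_div_iff₀ (by positivity) (by positivity)]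
      nlinarith
    calc (n:ℝ) * (Mf*Mg/(12*N^2)) = (Mf*Mg) * ((n:ℝ)/(12*N^2)) := by ring
      _ ≤ (Mf*Mg) * (1/(12*N)) := mul_le_mul_of_nonneg_left hr hMfMg
      _ = Mf*Mg/(12*N) := by ring
  have q2 : (n:ℝ) * (Mf*Mg*((n:ℝ)*x*(1-x))/N^2) ≤ 2 * (x*(1-x)) * (Mf*Mg) := by
    have h1 : (n:ℝ) * (Mf*Mg*((n:ℝ)*x*(1-x))/N^2) = (Mf*Mg*(x*(1-x))) * ((n:ℝ)^2/N^2) := by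
      field_simp
    have h2 : (n:ℝ)^2/N^2 ≤ 2 := by
      rw [div_le_iff₀ (by positivity)]
      nlinarith
    calc (n:ℝ) * (Mf*Mg*((n:ℝ)*x*(1-x))/N^2) = (Mf*Mg*(x*(1-x))) * ((n:ℝ)^2/N^2) := h1
      _ ≤ (Mf*Mg*(x*(1-x))) * 2 := mul_le_mul_of_nonneg_left h2 (mul_nonneg hMfMg hxq)
      _ = 2 * (x*(1-x)) * (Mf*Mg) := by ring
  have hRHS : 2 * (x * (1-x) + 1/(24*N)) * Mf * Mg
      = 2 * (x*(1-x)) * (Mf*Mg) + Mf*Mg/(12*N) := by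
    field_simp; ring
  rw [hRHS]
  rw [mul_add] at hmul
  linarith


lemma avg_shift (f : ℝ → ℝ) (M : ℝ)
    (hfc : ContinuousOn f (Icc (0:ℝ) 1))
    (hlip : ∀ s ∈ Icc (0:ℝ) 1, ∀ t ∈ Icc (0:ℝ) 1, |f s - f t| ≤ M * |s - t|)
    (n j k : ℕ) (hj : j ≤ n) (hk : k ≤ n) :
    |(((n:ℝ)+1) * ∫ t in ((j:ℝ)/((n:ℝ)+1))..(((j:ℝ)+1)/((n:ℝ)+1)), f t)
      - (((n:ℝ)+1) * ∫ t in ((k:ℝ)/((n:ℝ)+1))..(((k:ℝ)+1)/((n:ℝ)+1)), f t)|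
      ≤ M * (|(j:ℝ) - (k:ℝ)| / ((n:ℝ)+1)) := by
  set N := (n:ℝ) + 1 with hNdef
  have hN : (0:ℝ) < N := by positivity
  set d := ((j:ℝ) - (k:ℝ))/N with hd
  have hIk : Icc ((k:ℝ)/N) (((k:ℝ)+1)/N) ⊆ Icc (0:ℝ) 1 := by
    apply Set.Icc_subset_Icc
    · positivity
    · rw [div_le_one hN]
      have : (k:ℝ) ≤ n := Nat.cast_le.mpr hk
      linarith
  have hIj : Icc ((j:ℝ)/N) (((j:ℝ)+1)/N) ⊆ Icc (0:ℝ) 1 := by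
    apply Set.Icc_subset_Icc
    · positivity
    · rw [div_le_one hN]
      have : (j:ℝ) ≤ n := Nat.cast_le.mpr hj
      linarith
  have hklt : (k:ℝ)/N < ((k:ℝ)+1)/N := by
    rw [div_lt_div_iff₀ hN hN]; nlinarith
  have hkle : (k:ℝ)/N ≤ ((k:ℝ)+1)/N := hklt.le
  have e1 : (k:ℝ)/N + d = (j:ℝ)/N := by rw [hd]; ring
  have e2 : ((k:ℝ)+1)/N + d = ((j:ℝ)+1)/N := by rw [hd]; ring
  have comp : ∫ t in ((k:ℝ)/N)..(((k:ℝ)+1)/N), f (t + d)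
      = ∫ t in ((j:ℝ)/N)..(((j:ℝ)+1)/N), f t := by
    rw [intervalIntegral.integral_comp_add_right f d, e1, e2]
  have key : (N * ∫ t in ((j:ℝ)/N)..(((j:ℝ)+1)/N), f t)
      - (N * ∫ t in ((k:ℝ)/N)..(((k:ℝ)+1)/N), f t)
      = N * ∫ t in ((k:ℝ)/N)..(((k:ℝ)+1)/N), (f (t + d) - f t) := by
    rw [intervalIntegral.integral_sub, comp, mul_sub]
    · have hmaps : MapsTo (fun t => t + d) (Icc ((k:ℝ)/N) (((k:ℝ)+1)/N))
          (Icc ((j:ℝ)/N) (((j:ℝ)+1)/N)) := by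
        intro t ht
        constructor
        · have := ht.1; rw [← e1]; simp only [Set.mem_Icc] at *; linarith
        · have := ht.2; rw [← e2]; linarith
      exact ((hfc.mono hIj).comp ((continuous_add_right d).continuousOn) hmaps).intervalIntegrable_of_Icc hkle
    · exact (hfc.mono hIk).intervalIntegrable_of_Icc hkle
  rw [key, abs_mul, abs_of_pos hN]
  have hbound : ∀ t ∈ Set.uIoc ((k:ℝ)/N) (((k:ℝ)+1)/N), ‖f (t + d) - f t‖ ≤ M * |d| := by
    intro t ht
    rw [Set.uIoc_of_le hkle] at ht
    have ht' : t ∈ Icc ((k:ℝ)/N) (((k:ℝ)+1)/N) := ⟨ht.1.le, ht.2⟩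
    have htd : t + d ∈ Icc ((j:ℝ)/N) (((j:ℝ)+1)/N) := by
      constructor
      · rw [← e1]; linarith [ht'.1]
      · rw [← e2]; linarith [ht'.2]
    have := hlip (t + d) (hIj htd) t (hIk ht')
    simpa using this
  have := intervalIntegral.norm_integral_le_of_norm_le_const hbound
  rw [Real.norm_eq_abs] at this
  have hlen : |((k:ℝ)+1)/N - (k:ℝ)/N| = 1/N := by
    have : ((k:ℝ)+1)/N - (k:ℝ)/N = 1/N := by field_simp; ring
    rw [this, abs_of_pos (by positivity)]
  rw [hlen] at this
  calc N * |∫ t in ((k:ℝ)/N)..(((k:ℝ)+1)/N), (f (t + d) - f t)|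
      ≤ N * (M * |d| * (1/N)) := by
        apply mul_le_mul_of_nonneg_left this hN.le
    _ = M * |d| := by field_simp
    _ = M * (|(j:ℝ) - (k:ℝ)| / N) := by
        rw [hd, abs_div, abs_of_pos hN]

lemma supNorm_spec (f : ℝ → ℝ) (hf : ContDiffOn ℝ 1 f (Icc (0:ℝ) 1)) :
    0 ≤ supNorm (derivWithin f (Icc (0:ℝ) 1)) ∧
    ∀ s ∈ Icc (0:ℝ) 1, ∀ t ∈ Icc (0:ℝ) 1,
      |f s - f t| ≤ supNorm (derivWithin f (Icc (0:ℝ) 1)) * |s - t| := by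
  set f' := derivWithin f (Icc (0:ℝ) 1)
  have hset : {y | ∃ x ∈ Icc (0:ℝ) 1, y = |f' x|} = (fun x => |f' x|) '' (Icc 0 1) := by
    ext y; simp [eq_comm]
  have hcont : ContinuousOn (fun x => |f' x|) (Icc (0:ℝ) 1) :=
    (hf.continuousOn_derivWithin (uniqueDiffOn_Icc one_pos) le_rfl).abs
  have hbdd : BddAbove {y | ∃ x ∈ Icc (0:ℝ) 1, y = |f' x|} := by
    rw [hset]; exact (isCompact_Icc.image_of_continuousOn hcont).bddAbove
  have hle : ∀ y ∈ Icc (0:ℝ) 1, |f' y| ≤ supNorm f' := fun y hy =>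
    le_csSup hbdd ⟨y, hy, rfl⟩
  have h0 : 0 ≤ supNorm f' := le_trans (abs_nonneg _) (hle 0 (by norm_num))
  refine ⟨h0, fun s hs t ht => ?_⟩
  have := Convex.norm_image_sub_le_of_norm_derivWithin_le
    (hf.differentiableOn one_ne_zero) (fun y hy => hle y hy) (convex_Icc 0 1) ht hs
  simpa [Real.norm_eq_abs] using this


theorem kantorovich_gruss_C1_pointwise (n : ℕ) (hn : 1 ≤ n)
    (f g : ℝ → ℝ) (hf : ContDiffOn ℝ 1 f (Icc (0:ℝ) 1)) (hg : ContDiffOn ℝ 1 g (Icc (0:ℝ) 1))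
    (x : ℝ) (hx : x ∈ Icc (0:ℝ) 1) :
    |(n : ℝ) * (kantorovich n (fun t => f t * g t) x
        - kantorovich n f x * kantorovich n g x)|
      ≤ 2 * (x * (1 - x) + 1 / (24 * ((n : ℝ) + 1)))
          * supNorm (derivWithin f (Icc (0:ℝ) 1)) * supNorm (derivWithin g (Icc (0:ℝ) 1)) := by
  obtain ⟨hx0, hx1⟩ := hx
  obtain ⟨hMf0, hMfL⟩ := supNorm_spec f hf
  obtain ⟨hMg0, hMgL⟩ := supNorm_spec g hg
  have hfc : ContinuousOn f (Icc (0:ℝ) 1) := hf.continuousOn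
  have hgc : ContinuousOn g (Icc (0:ℝ) 1) := hg.continuousOn
  have hN : (0:ℝ) < (n:ℝ) + 1 := by positivity
  -- probability weights
  have hP0 : ∀ k : ℕ, 0 ≤ (n.choose k : ℝ) * x ^ k * (1 - x) ^ (n - k) := by
    intro k
    have h1 : (0:ℝ) ≤ 1 - x := by linarith
    have := pow_nonneg hx0 k
    have := pow_nonneg h1 (n - k)
    positivity
  have hP1 : ∑ k ∈ Finset.range (n+1), (n.choose k : ℝ) * x ^ k * (1-x) ^ (n-k) = 1 := by
    have h := bernsteinPolynomial.sum ℝ n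
    have := congrArg (Polynomial.eval x) h
    simpa [bernsteinPolynomial, Polynomial.eval_finset_sum, mul_assoc] using this
  have hPmean : ∑ k ∈ Finset.range (n+1),
      ((n.choose k : ℝ) * x ^ k * (1-x) ^ (n-k)) * (k:ℝ) = (n:ℝ) * x := by
    have h := bernsteinPolynomial.sum_smul ℝ n
    have := congrArg (Polynomial.eval x) h
    simp [bernsteinPolynomial, Polynomial.eval_finset_sum, nsmul_eq_mul] at this
    rw [← this]
    apply Finset.sum_congr rfl
    intro k _; ring
  have hPvar : ∑ k ∈ Finset.range (n+1),
      ((n.choose k : ℝ) * x ^ k * (1-x) ^ (n-k)) * ((n:ℝ)*x - k)^2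
      = (n:ℝ) * x * (1 - x) := by
    have h := bernsteinPolynomial.variance ℝ n
    have := congrArg (Polynomial.eval x) h
    simp [bernsteinPolynomial, Polynomial.eval_finset_sum, nsmul_eq_mul] at this
    rw [← this]
    apply Finset.sum_congr rfl
    intro k _; ring
  have hPk2 : ∑ k ∈ Finset.range (n+1),
      ((n.choose k : ℝ) * x ^ k * (1-x) ^ (n-k)) * ((k:ℝ)*(k:ℝ))
      = (n:ℝ)*x*(1-x) + ((n:ℝ)*x)^2 := by
    have hexp : ∑ k ∈ Finset.range (n+1),
        ((n.choose k : ℝ) * x ^ k * (1-x) ^ (n-k)) * ((n:ℝ)*x - k)^2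
        = ((n:ℝ)*x)^2 * (∑ k ∈ Finset.range (n+1), (n.choose k : ℝ) * x ^ k * (1-x) ^ (n-k))
          - 2*((n:ℝ)*x) * (∑ k ∈ Finset.range (n+1),
              ((n.choose k : ℝ) * x ^ k * (1-x) ^ (n-k)) * (k:ℝ))
          + ∑ k ∈ Finset.range (n+1),
              ((n.choose k : ℝ) * x ^ k * (1-x) ^ (n-k)) * ((k:ℝ)*(k:ℝ)) := by
      rw [Finset.mul_sum, Finset.mul_sum, ← Finset.sum_sub_distrib, ← Finset.sum_add_distrib]
      apply Finset.sum_congr rfl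
      intro k _; ring
    rw [hPvar, hP1, hPmean] at hexp
    nlinarith [hexp]
  -- sub-interval inclusion
  have hsubI : ∀ k : ℕ, k ≤ n → Icc ((k:ℝ)/((n:ℝ)+1)) (((k:ℝ)+1)/((n:ℝ)+1)) ⊆ Icc (0:ℝ) 1 := by
    intro k hk
    apply Set.Icc_subset_Icc
    · positivity
    · rw [div_le_one hN]
      have : (k:ℝ) ≤ n := Nat.cast_le.mpr hk
      linarith
  -- cell bound
  have hcell : ∀ k ∈ Finset.range (n+1),
      |(((n:ℝ)+1) * ∫ t in ((k:ℝ)/((n:ℝ)+1))..(((k:ℝ)+1)/((n:ℝ)+1)), f t * g t)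
        - (((n:ℝ)+1) * ∫ t in ((k:ℝ)/((n:ℝ)+1))..(((k:ℝ)+1)/((n:ℝ)+1)), f t)
          * (((n:ℝ)+1) * ∫ t in ((k:ℝ)/((n:ℝ)+1))..(((k:ℝ)+1)/((n:ℝ)+1)), g t)|
      ≤ supNorm (derivWithin f (Icc (0:ℝ) 1)) * supNorm (derivWithin g (Icc (0:ℝ) 1))
          / (12 * ((n:ℝ)+1)^2) := by
    intro k hk
    have hkn : k ≤ n := Nat.lt_succ_iff.mp (Finset.mem_range.mp hk)
    set a := (k:ℝ)/((n:ℝ)+1) with ha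
    set b := ((k:ℝ)+1)/((n:ℝ)+1) with hb
    have hab : a < b := by
      rw [ha, hb, div_lt_div_iff₀ hN hN]; nlinarith
    have hsub := hsubI k hkn
    have hcb := cell_bound f g a b
      (supNorm (derivWithin f (Icc (0:ℝ) 1))) (supNorm (derivWithin g (Icc (0:ℝ) 1)))
      hab (hfc.mono hsub) (hgc.mono hsub) hMf0 hMg0
      (fun s hs t ht => hMfL s (hsub hs) t (hsub ht))
      (fun s hs t ht => hMgL s (hsub hs) t (hsub ht))
    have hba : b - a = 1/((n:ℝ)+1) := by rw [ha, hb]; field_simp; ring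
    have e : (((n:ℝ)+1) * ∫ t in a..b, f t * g t)
        - (((n:ℝ)+1) * ∫ t in a..b, f t) * (((n:ℝ)+1) * ∫ t in a..b, g t)
        = ((n:ℝ)+1)^2 * ((b - a) * (∫ t in a..b, f t * g t)
            - (∫ t in a..b, f t) * (∫ t in a..b, g t)) := by
      rw [hba]; field_simp
    rw [e, abs_mul, abs_of_pos (by positivity : (0:ℝ) < ((n:ℝ)+1)^2)]
    calc ((n:ℝ)+1)^2 * |(b - a) * (∫ t in a..b, f t * g t)
          - (∫ t in a..b, f t) * (∫ t in a..b, g t)|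
        ≤ ((n:ℝ)+1)^2 * (supNorm (derivWithin f (Icc (0:ℝ) 1))
            * supNorm (derivWithin g (Icc (0:ℝ) 1)) * (b - a)^4 / 12) :=
          mul_le_mul_of_nonneg_left hcb (by positivity)
      _ = supNorm (derivWithin f (Icc (0:ℝ) 1)) * supNorm (derivWithin g (Icc (0:ℝ) 1))
            / (12 * ((n:ℝ)+1)^2) := by
          rw [hba]; field_simp
  -- shift bounds
  have hshF : ∀ j ∈ Finset.range (n+1), ∀ k ∈ Finset.range (n+1),
      |(((n:ℝ)+1) * ∫ t in ((j:ℝ)/((n:ℝ)+1))..(((j:ℝ)+1)/((n:ℝ)+1)), f t)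
        - (((n:ℝ)+1) * ∫ t in ((k:ℝ)/((n:ℝ)+1))..(((k:ℝ)+1)/((n:ℝ)+1)), f t)|
      ≤ supNorm (derivWithin f (Icc (0:ℝ) 1)) * (|(j:ℝ)-(k:ℝ)| / ((n:ℝ)+1)) := by
    intro j hj k hk
    exact avg_shift f _ hfc hMfL n j k
      (Nat.lt_succ_iff.mp (Finset.mem_range.mp hj)) (Nat.lt_succ_iff.mp (Finset.mem_range.mp hk))
  have hshG : ∀ j ∈ Finset.range (n+1), ∀ k ∈ Finset.range (n+1),
      |(((n:ℝ)+1) * ∫ t in ((j:ℝ)/((n:ℝ)+1))..(((j:ℝ)+1)/((n:ℝ)+1)), g t)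
        - (((n:ℝ)+1) * ∫ t in ((k:ℝ)/((n:ℝ)+1))..(((k:ℝ)+1)/((n:ℝ)+1)), g t)|
      ≤ supNorm (derivWithin g (Icc (0:ℝ) 1)) * (|(j:ℝ)-(k:ℝ)| / ((n:ℝ)+1)) := by
    intro j hj k hk
    exact avg_shift g _ hgc hMgL n j k
      (Nat.lt_succ_iff.mp (Finset.mem_range.mp hj)) (Nat.lt_succ_iff.mp (Finset.mem_range.mp hk))
  -- apply the abstract bound
  have main := abstract_bound n hn x hx0 hx1
    (fun k => (n.choose k : ℝ) * x ^ k * (1 - x) ^ (n - k))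
    (fun k : ℕ => ((n:ℝ)+1) * ∫ t in ((k:ℝ)/((n:ℝ)+1))..(((k:ℝ)+1)/((n:ℝ)+1)), f t)
    (fun k : ℕ => ((n:ℝ)+1) * ∫ t in ((k:ℝ)/((n:ℝ)+1))..(((k:ℝ)+1)/((n:ℝ)+1)), g t)
    (fun k : ℕ => ((n:ℝ)+1) * ∫ t in ((k:ℝ)/((n:ℝ)+1))..(((k:ℝ)+1)/((n:ℝ)+1)), f t * g t)
    (supNorm (derivWithin f (Icc (0:ℝ) 1))) (supNorm (derivWithin g (Icc (0:ℝ) 1)))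
    hMf0 hMg0 ((n:ℝ)+1) rfl hP0 hP1 hPmean hPk2 hcell hshF hshG
  -- rewrite kantorovich as weighted sums
  have hK : ∀ u : ℝ → ℝ, kantorovich n u x
      = ∑ k ∈ Finset.range (n+1), ((n.choose k : ℝ) * x ^ k * (1 - x) ^ (n - k))
          * (((n:ℝ)+1) * ∫ t in ((k:ℝ)/((n:ℝ)+1))..(((k:ℝ)+1)/((n:ℝ)+1)), u t) := by
    intro u
    rw [kantorovich, Finset.mul_sum]
    apply Finset.sum_congr rfl
    intro k _; ring
  rw [hK, hK, hK]
  exact main
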